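/- For every real a, every real x, and all nonnegative integers j ≤ i, one has ∑_{k=j}^{i} C_{i-k}^{(a)}(x) C_{k-j}^{(-a)}(-x) = δ_{ij}, where δ_{ij} is the Kronecker delta (equal to 1 if i = j and 0 otherwise). -/

import Mathlib

/-- Generalized binomial coefficient `x(x-1)⋯(x-k+1)/k!`. -/
noncomputable def genChoose (x : ℝ) (k : ℕ) : ℝ :=
  (∏ j ∈ Finset.range k, (x - (j : ℝ))) / (Nat.factorial k : ℝ)

/-- The Charlier polynomial `C_n^{(a)}(x) = ∑_{k=0}^n (x choose k) (-a)^{n-k}/(n-k)!`. -/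
noncomputable def charlier (a : ℝ) (n : ℕ) (x : ℝ) : ℝ :=
  ∑ k ∈ Finset.range (n + 1),
    genChoose x k * (-a) ^ (n - k) / (Nat.factorial (n - k) : ℝ)

/-- Charlier polynomial with integer index, with the convention `C_{-1}^{(a)} ≡ 0`. -/
noncomputable def charlierZ (a : ℝ) (n : ℤ) (x : ℝ) : ℝ :=
  if 0 ≤ n then charlier a n.toNat x else 0

/-- Forward difference operator `Δf(x) = f(x+1) - f(x)`. -/
def fdiff (f : ℝ → ℝ) : ℝ → ℝ := fun x => f (x + 1) - f x

/-- Backward difference operator `∇f(x) = f(x) - f(x-1)`. -/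
def bdiff (f : ℝ → ℝ) : ℝ → ℝ := fun x => f x - f (x - 1)

/-- The generalized Charlier polynomial
`C_n^{a,N}(x) = [1 + N(-1)^n C_n^{(a)}(-1)] C_n^{(a)}(x) - N(-1)^n C_n^{(a)}(0) C_n^{(a)}(x-1)`. -/
noncomputable def genCharlier (a N : ℝ) (n : ℕ) (x : ℝ) : ℝ :=
  (1 + N * (-1) ^ n * charlier a n (-1)) * charlier a n x
    - N * (-1) ^ n * charlier a n 0 * charlier a n (x - 1)

/-- The coefficient `A_i(x)` (for `i ≥ 1`) of the difference equation. -/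
noncomputable def Acoef (a : ℝ) (i : ℕ) (x : ℝ) : ℝ :=
  ∑ k ∈ Finset.Icc 1 i, (-1 : ℝ) ^ k * charlier (-a) (i - k) (-x + 1) *
    (charlier a k (-1) * charlier a k (x - 2) - charlier a k (-2) * charlier a k (x - 1))

/-- The coefficient `A_0 = (-1)^{n-1} C_{n-1}^{(a)}(-2)` (with `C_{-1}^{(a)} ≡ 0`). -/
noncomputable def A0coef (a : ℝ) (n : ℕ) : ℝ :=
  (-1 : ℝ) ^ ((n : ℤ) - 1) * charlierZ a ((n : ℤ) - 1) (-2)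

open Finset PowerSeries

lemma descPochhammer_smeval_real (x : ℝ) (n : ℕ) :
    (descPochhammer ℤ n).smeval x = ∏ j ∈ Finset.range n, (x - (j : ℝ)) := by
  induction n with
  | zero => simp [descPochhammer_zero, Polynomial.smeval_one]
  | succ n ih =>
      rw [descPochhammer_succ_right, Polynomial.smeval_mul, ih, Finset.prod_range_succ,
        Polynomial.smeval_sub, Polynomial.smeval_X, Polynomial.smeval_natCast]
      simp

lemma genChoose_eq_choose (x : ℝ) (k : ℕ) : genChoose x k = Ring.choose x k := by
  have h := Ring.descPochhammer_eq_factorial_smul_choose (R := ℝ) x k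
  rw [descPochhammer_smeval_real, nsmul_eq_mul] at h
  have hk : (Nat.factorial k : ℝ) ≠ 0 := Nat.cast_ne_zero.mpr (Nat.factorial_ne_zero k)
  rw [genChoose, h]
  field_simp

/-- binomial series (1+t)^x -/
noncomputable def Bser (x : ℝ) : PowerSeries ℝ := PowerSeries.mk (genChoose x)

/-- exponential series e^{-a t} -/
noncomputable def Eser (a : ℝ) : PowerSeries ℝ :=
  PowerSeries.mk fun r => (-a) ^ r / (Nat.factorial r : ℝ)

lemma charlier_eq_coeff (a : ℝ) (n : ℕ) (x : ℝ) :
    charlier a n x = PowerSeries.coeff n (Bser x * Eser a) := by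
  rw [PowerSeries.coeff_mul, Finset.Nat.sum_antidiagonal_eq_sum_range_succ_mk, charlier]
  refine Finset.sum_congr rfl fun k _ => ?_
  simp [Bser, Eser, mul_div_assoc]

lemma Bser_mul_Bser (x : ℝ) : Bser x * Bser (-x) = 1 := by
  ext n
  rw [PowerSeries.coeff_mul]
  have : ∀ p ∈ Finset.HasAntidiagonal.antidiagonal n,
      PowerSeries.coeff p.1 (Bser x) * PowerSeries.coeff p.2 (Bser (-x)) =
        Ring.choose x p.1 * Ring.choose (-x) p.2 := by
    intro p _
    simp [Bser, genChoose_eq_choose]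
  rw [Finset.sum_congr rfl this, ← Ring.add_choose_eq n (Commute.all x (-x)), add_neg_cancel,
    Ring.choose_zero_ite]
  simp [PowerSeries.coeff_one, eq_comm]

lemma Eser_mul_Eser (a : ℝ) : Eser a * Eser (-a) = 1 := by
  ext n
  rw [PowerSeries.coeff_mul, Finset.Nat.sum_antidiagonal_eq_sum_range_succ_mk]
  have key : ∀ k ∈ Finset.range (n + 1),
      PowerSeries.coeff k (Eser a) * PowerSeries.coeff (n - k) (Eser (-a)) =
        (-a) ^ k * a ^ (n - k) * (n.choose k : ℝ) / (Nat.factorial n : ℝ) := by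
    intro k hk
    have hkn : k ≤ n := Nat.lt_succ_iff.mp (Finset.mem_range.mp hk)
    have hfact : (n.choose k : ℝ) * k.factorial * (n - k).factorial = n.factorial := by
      exact_mod_cast congrArg (Nat.cast : ℕ → ℝ)
        (Nat.choose_mul_factorial_mul_factorial hkn)
    have h1 : (Nat.factorial k : ℝ) ≠ 0 := Nat.cast_ne_zero.mpr (Nat.factorial_ne_zero k)
    have h2 : (Nat.factorial (n - k) : ℝ) ≠ 0 := Nat.cast_ne_zero.mpr (Nat.factorial_ne_zero _)
    have h3 : (Nat.factorial n : ℝ) ≠ 0 := Nat.cast_ne_zero.mpr (Nat.factorial_ne_zero n)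
    simp only [Eser, PowerSeries.coeff_mk, neg_neg]
    field_simp
    rw [← hfact]; ring
  rw [Finset.sum_congr rfl key, ← Finset.sum_div]
  have : ∑ k ∈ Finset.range (n + 1), (-a) ^ k * a ^ (n - k) * (n.choose k : ℝ)
      = ((-a) + a) ^ n := (add_pow (-a) a n).symm
  rw [this, neg_add_cancel]
  rcases Nat.eq_zero_or_pos n with h | h
  · subst h; simp
  · rw [zero_pow (Nat.pos_iff_ne_zero.mp h)]
    simp [PowerSeries.coeff_one, Nat.pos_iff_ne_zero.mp h]

/-- For `j ≤ i`, `∑_{k=j}^i C_{i-k}^{(a)}(x) C_{k-j}^{(-a)}(-x) = δ_{ij}`. -/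
theorem charlier_inverse_relation (a x : ℝ) (i j : ℕ) (hji : j ≤ i) :
    ∑ k ∈ Finset.Icc j i, charlier a (i - k) x * charlier (-a) (k - j) (-x)
      = if i = j then (1 : ℝ) else 0 := by
  have hsum : ∑ k ∈ Finset.Icc j i, charlier a (i - k) x * charlier (-a) (k - j) (-x)
      = ∑ m ∈ Finset.range (i - j + 1),
          charlier a ((i - j) - m) x * charlier (-a) m (-x) := by
    rw [← Finset.Ico_add_one_right_eq_Icc, Finset.sum_Ico_eq_sum_range]
    have : i + 1 - j = i - j + 1 := by omega
    rw [this]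
    refine Finset.sum_congr rfl fun m hm => ?_
    have hm' : m ≤ i - j := Nat.lt_succ_iff.mp (Finset.mem_range.mp hm)
    congr 2 <;> omega
  set n := i - j with hn
  have hcoeff : ∑ m ∈ Finset.range (n + 1),
      charlier a (n - m) x * charlier (-a) m (-x)
      = PowerSeries.coeff n ((Bser (-x) * Eser (-a)) * (Bser x * Eser a)) := by
    rw [PowerSeries.coeff_mul, Finset.Nat.sum_antidiagonal_eq_sum_range_succ_mk]
    refine Finset.sum_congr rfl fun m _ => ?_
    rw [charlier_eq_coeff, charlier_eq_coeff, mul_comm]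
  have hone : (Bser (-x) * Eser (-a)) * (Bser x * Eser a) = 1 := by
    have h1 : Bser (-x) * Bser x = 1 := by
      have := Bser_mul_Bser (-x); rwa [neg_neg] at this
    have h2 : Eser (-a) * Eser a = 1 := by
      have := Eser_mul_Eser (-a); rwa [neg_neg] at this
    calc (Bser (-x) * Eser (-a)) * (Bser x * Eser a)
        = (Bser (-x) * Bser x) * (Eser (-a) * Eser a) := by ring
      _ = 1 := by rw [h1, h2, one_mul]
  rw [hsum, hcoeff, hone]
  simp only [PowerSeries.coeff_one]
  have : n = 0 ↔ i = j := by omega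
  simp [this]
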